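/- Suppose L is an N1×N2 real matrix of rank r with compact SVD L = UΣVᵀ, and suppose the row-space incoherence parameter μ_v satisfies max_i ‖e_iᵀV‖₂² ≤ μ_v r / N2. If m1 columns of L are sampled uniformly at random with replacement and m1 ≥ 10 μ_v r log(2r/δ), then with probability at least 1−δ the sampled columns span the column space of L. -/

import Mathlib

open Matrix




open scoped Classical in
lemma count_notin {r N2 : ℕ} (v : Fin N2 → EuclideanSpace ℝ (Fin r))
    (hsum : ∀ x : EuclideanSpace ℝ (Fin r), ∑ j, (inner ℝ (v j) x : ℝ)^2 = ‖x‖^2)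
    (c : ℝ) (hc : ∀ j, ‖v j‖^2 ≤ c)
    (W : Submodule ℝ (EuclideanSpace ℝ (Fin r))) :
    (r : ℝ) - (Module.finrank ℝ W) ≤ (Finset.univ.filter fun j => v j ∉ W).card * c := by
  have hW : Module.finrank ℝ W + Module.finrank ℝ Wᗮ = r := by
    simpa [finrank_euclideanSpace_fin] using Submodule.finrank_add_finrank_orthogonal (𝕜 := ℝ) W
  set n := Module.finrank ℝ Wᗮ with hn
  let b : OrthonormalBasis (Fin n) ℝ Wᗮ := stdOrthonormalBasis ℝ Wᗮ
  have hortho : Orthonormal ℝ (fun i => (b i : EuclideanSpace ℝ (Fin r))) := by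
    rw [orthonormal_iff_ite]
    intro i j
    have h2 := b.orthonormal
    rw [orthonormal_iff_ite] at h2
    simpa [Submodule.coe_inner] using h2 i j
  have key : (n : ℝ) = ∑ j, ∑ i : Fin n, (inner ℝ (v j) (b i : EuclideanSpace ℝ (Fin r)) : ℝ)^2 := by
    rw [Finset.sum_comm]
    have h3 : ∀ i : Fin n, ∑ j, (inner ℝ (v j) (b i : EuclideanSpace ℝ (Fin r)) : ℝ)^2 = 1 := by
      intro i
      rw [hsum ((b i : EuclideanSpace ℝ (Fin r)))]
      have h4 : ‖(b i : EuclideanSpace ℝ (Fin r))‖ = 1 := hortho.1 i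
      rw [h4]; norm_num
    rw [show ∑ i : Fin n, ∑ j, (inner ℝ (v j) (b i : EuclideanSpace ℝ (Fin r)) : ℝ)^2 = ∑ i : Fin n, (1:ℝ) from Finset.sum_congr rfl fun i _ => h3 i]
    simp
  have hcast : (r : ℝ) - (Module.finrank ℝ W) = n := by
    push_cast [← hW]
    ring
  rw [hcast, key]
  have hbound : ∀ j, ∑ i : Fin n, (inner ℝ (v j) (b i : EuclideanSpace ℝ (Fin r)) : ℝ)^2 ≤ if v j ∈ W then 0 else c := by
    intro j
    by_cases h : v j ∈ W
    · simp only [h, if_true]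
      have h5 : ∀ i : Fin n, (inner ℝ (v j) (b i : EuclideanSpace ℝ (Fin r)) : ℝ) = 0 := fun i =>
        Submodule.inner_right_of_mem_orthogonal h (b i).2
      simp [h5]
    · simp only [h, if_false]
      have bessel := Orthonormal.sum_inner_products_le (𝕜 := ℝ) (v j) hortho (s := Finset.univ)
      calc ∑ i : Fin n, (inner ℝ (v j) (b i : EuclideanSpace ℝ (Fin r)) : ℝ)^2
          = ∑ i : Fin n, ‖(inner ℝ ((b i : EuclideanSpace ℝ (Fin r))) (v j) : ℝ)‖^2 := by
            refine Finset.sum_congr rfl fun i _ => ?_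
            rw [real_inner_comm, Real.norm_eq_abs, sq_abs]
        _ ≤ ‖v j‖^2 := bessel
        _ ≤ c := hc j
  calc ∑ j, ∑ i : Fin n, (inner ℝ (v j) (b i : EuclideanSpace ℝ (Fin r)) : ℝ)^2
      ≤ ∑ j, if v j ∈ W then 0 else c := Finset.sum_le_sum (fun j _ => hbound j)
    _ = (Finset.univ.filter fun j => v j ∉ W).card * c := by
        rw [Finset.sum_ite]
        simp [mul_comm]

open scoped Classical in
lemma step_lemma {r N2 : ℕ} (v : Fin N2 → EuclideanSpace ℝ (Fin r)) (c : ℝ) (hc : 0 < c)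
    (hcount : ∀ W : Submodule ℝ (EuclideanSpace ℝ (Fin r)),
      (r : ℝ) - (Module.finrank ℝ W) ≤ (Finset.univ.filter fun j => v j ∉ W).card * c)
    (W : Submodule ℝ (EuclideanSpace ℝ (Fin r))) :
    ∑ j : Fin N2, ((r:ℝ) - Module.finrank ℝ (W ⊔ Submodule.span ℝ {v j} : Submodule ℝ _))
      ≤ (N2 : ℝ) * (1 - 1/((N2:ℝ)*c)) * ((r:ℝ) - Module.finrank ℝ W) := by
  classical
  set d := Module.finrank ℝ W with hd
  have hdr : d ≤ r := by
    simpa [finrank_euclideanSpace_fin] using Submodule.finrank_le W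
  set s := (Finset.univ.filter fun j => v j ∉ W) with hs
  have hterm : ∀ j : Fin N2, ((r:ℝ) - Module.finrank ℝ (W ⊔ Submodule.span ℝ {v j} : Submodule ℝ _))
      ≤ ((r:ℝ) - d) - (if v j ∈ W then 0 else 1) := by
    intro j
    by_cases h : v j ∈ W
    · have : (W ⊔ Submodule.span ℝ {v j} : Submodule ℝ _) = W := by
        rw [sup_eq_left]
        exact (Submodule.span_singleton_le_iff_mem _ _).2 h
      rw [this]; simp [h, hd]
    · have hlt : W < W ⊔ Submodule.span ℝ {v j} := by
        refine lt_of_le_of_ne le_sup_left ?_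
        intro heq
        apply h
        rw [heq]
        exact Submodule.mem_sup_right (Submodule.mem_span_singleton_self (v j))
      have : d + 1 ≤ Module.finrank ℝ (W ⊔ Submodule.span ℝ {v j} : Submodule ℝ _) :=
        Submodule.finrank_lt_finrank_of_lt hlt
      simp only [h, if_false]
      have := (Nat.cast_le (α := ℝ)).2 this
      push_cast at this ⊢
      linarith
  calc ∑ j : Fin N2, ((r:ℝ) - Module.finrank ℝ (W ⊔ Submodule.span ℝ {v j} : Submodule ℝ _))
      ≤ ∑ j : Fin N2, (((r:ℝ) - d) - (if v j ∈ W then 0 else 1)) :=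
        Finset.sum_le_sum fun j _ => hterm j
    _ = (N2:ℝ) * ((r:ℝ) - d) - s.card := by
        rw [Finset.sum_sub_distrib]
        simp [hs, Finset.sum_ite, Finset.filter_not]
        ring
    _ ≤ (N2:ℝ) * ((r:ℝ) - d) - ((r:ℝ) - d)/c := by
        have h1 := hcount W
        rw [← hs, ← hd] at h1
        have : ((r:ℝ) - d)/c ≤ s.card := by
          rw [div_le_iff₀ hc]
          exact h1
        linarith
    _ = (N2 : ℝ) * (1 - 1/((N2:ℝ)*c)) * ((r:ℝ) - d) := by
        by_cases hN : (N2:ℝ) = 0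
        · have hrd : (r:ℝ) - d = 0 := by
            have hs0 : (s.card : ℝ) = 0 := by
              have hN0 : N2 = 0 := by exact_mod_cast hN
              subst hN0
              simp [hs]
            have h1 := hcount W
            rw [← hs, ← hd] at h1
            rw [hs0] at h1
            have hdr' : (d:ℝ) ≤ r := by exact_mod_cast hdr
            nlinarith
          rw [hrd]; simp [hN, hrd]
        · field_simp

open scoped Classical in
lemma induct_lemma {r N2 : ℕ} (v : Fin N2 → EuclideanSpace ℝ (Fin r)) (q : ℝ)
    (hq1 : q ≤ 1)
    (hstep : ∀ W : Submodule ℝ (EuclideanSpace ℝ (Fin r)),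
      ∑ j : Fin N2, ((r:ℝ) - Module.finrank ℝ (W ⊔ Submodule.span ℝ {v j} : Submodule ℝ _))
        ≤ (N2 : ℝ) * (1 - q) * ((r:ℝ) - Module.finrank ℝ W)) :
    ∀ m : ℕ, ∑ f : Fin m → Fin N2,
        ((r:ℝ) - Module.finrank ℝ (Submodule.span ℝ (Set.range (v ∘ f))))
      ≤ (N2:ℝ)^m * (1-q)^m * r := by
  classical
  have hnonneg : ∀ W : Submodule ℝ (EuclideanSpace ℝ (Fin r)),
      (0:ℝ) ≤ (r:ℝ) - Module.finrank ℝ W := by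
    intro W
    have : Module.finrank ℝ W ≤ r := by
      simpa [finrank_euclideanSpace_fin] using Submodule.finrank_le W
    have : (Module.finrank ℝ W : ℝ) ≤ r := by exact_mod_cast this
    linarith
  intro m
  induction m with
  | zero =>
    simp [Set.range_eq_empty]
  | succ m ih =>
    have hsum : ∑ f : Fin (m+1) → Fin N2,
        ((r:ℝ) - Module.finrank ℝ (Submodule.span ℝ (Set.range (v ∘ f))))
      = ∑ p : Fin N2 × (Fin m → Fin N2),
        ((r:ℝ) - Module.finrank ℝ (Submodule.span ℝ (Set.range (v ∘ (Fin.cons p.1 p.2))))) := by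
      exact (Fintype.sum_equiv (Fin.consEquiv fun _ => Fin N2) _ _ (fun p => rfl)).symm
    rw [hsum, Fintype.sum_prod_type_right]
    have hspan : ∀ (f : Fin m → Fin N2) (j : Fin N2),
        Submodule.span ℝ (Set.range (v ∘ (Fin.cons j f)))
        = Submodule.span ℝ (Set.range (v ∘ f)) ⊔ Submodule.span ℝ {v j} := by
      intro f j
      rw [Set.range_comp, Fin.range_cons, Set.image_insert_eq, Submodule.span_insert,
        ← Set.range_comp, sup_comm]
    calc ∑ f : Fin m → Fin N2, ∑ j : Fin N2,
          ((r:ℝ) - Module.finrank ℝ (Submodule.span ℝ (Set.range (v ∘ (Fin.cons j f)))))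
        ≤ ∑ f : Fin m → Fin N2, (N2 : ℝ) * (1 - q) *
            ((r:ℝ) - Module.finrank ℝ (Submodule.span ℝ (Set.range (v ∘ f)))) := by
          refine Finset.sum_le_sum fun f _ => ?_
          have := hstep (Submodule.span ℝ (Set.range (v ∘ f)))
          calc ∑ j : Fin N2, ((r:ℝ) - Module.finrank ℝ (Submodule.span ℝ (Set.range (v ∘ (Fin.cons j f)))))
              = ∑ j : Fin N2, ((r:ℝ) - Module.finrank ℝ ((Submodule.span ℝ (Set.range (v ∘ f))) ⊔ Submodule.span ℝ {v j} : Submodule ℝ _)) := by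
                exact Finset.sum_congr rfl fun j _ => by rw [hspan f j]
            _ ≤ _ := this
      _ = (N2 : ℝ) * (1 - q) * ∑ f : Fin m → Fin N2,
            ((r:ℝ) - Module.finrank ℝ (Submodule.span ℝ (Set.range (v ∘ f)))) := by
          rw [Finset.mul_sum]
      _ ≤ (N2 : ℝ) * (1 - q) * ((N2:ℝ)^m * (1-q)^m * r) := by
          apply mul_le_mul_of_nonneg_left ih
          have h1q : (0:ℝ) ≤ 1 - q := by linarith
          positivity
      _ = (N2:ℝ)^(m+1) * (1-q)^(m+1) * r := by ring

lemma numeric_lemma (r m1 : ℕ) (μv δ : ℝ) (hr : 1 ≤ r) (hδ0 : 0 < δ) (hδ1 : δ < 1)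
    (hμr : (r:ℝ) ≤ μv * r) (hm1 : (m1:ℝ) ≥ 10 * μv * r * Real.log (2*r/δ)) :
    (r:ℝ) * (1 - 1/(μv * (r:ℝ)))^m1 ≤ δ := by
  have hr1 : (1:ℝ) ≤ r := by exact_mod_cast hr
  set t := μv * (r:ℝ) with ht
  have ht1 : (1:ℝ) ≤ t := le_trans hr1 hμr
  have ht0 : (0:ℝ) < t := by linarith
  set q := 1/t with hq
  have hq0 : 0 < q := by positivity
  have hq1 : q ≤ 1 := by rw [hq, div_le_one ht0]; linarith
  have hLpos : 0 ≤ Real.log (2*r/δ) := by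
    apply Real.log_nonneg
    rw [le_div_iff₀ hδ0]
    linarith
  set L := Real.log (2*r/δ) with hL
  -- (1-q)^m1 ≤ exp (-(q*m1))
  have h1 : (1 - q)^m1 ≤ Real.exp (-(q * m1)) := by
    have hbase : 1 - q ≤ Real.exp (-q) := by
      have := Real.add_one_le_exp (-q)
      linarith
    calc (1 - q)^m1 ≤ (Real.exp (-q))^m1 := by
          apply pow_le_pow_left₀ (by linarith) hbase
      _ = Real.exp (-(q * m1)) := by
          rw [← Real.exp_nat_mul]
          ring_nf
  -- q * m1 ≥ 10 L
  have h2 : 10 * L ≤ q * m1 := by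
    rw [hq, div_mul_eq_mul_div, le_div_iff₀ ht0]
    calc 10 * L * t = 10 * t * L := by ring
      _ ≤ 1 * m1 := by
          have h7 : 10 * μv * (r:ℝ) * L = 10 * t * L := by rw [ht]; ring
          rw [one_mul]
          linarith [hm1, h7]
  have h3 : Real.exp (-(q * m1)) ≤ Real.exp (-(10 * L)) := by
    apply Real.exp_le_exp.2
    linarith
  have h4 : Real.exp (-(10 * L)) = (δ/(2*r))^(10:ℕ) := by
    have hx : (0:ℝ) < 2*r/δ := by positivity
    rw [hL, show ((10:ℝ) * Real.log (2*r/δ)) = ((10:ℕ):ℝ) * Real.log (2*r/δ) by norm_num,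
      Real.exp_neg, Real.exp_nat_mul, Real.exp_log hx]
    rw [← inv_pow]
    congr 1
    rw [inv_div]
  have h5 : (δ/(2*r))^(10:ℕ) ≤ δ/(2*r) := by
    apply pow_le_of_le_one
    · positivity
    · rw [div_le_one (by positivity)]
      linarith
    · norm_num
  have h6 : (r:ℝ) * (δ/(2*r)) ≤ δ := by
    rw [mul_div_assoc']
    rw [div_le_iff₀ (by positivity)]
    nlinarith
  calc (r:ℝ) * (1 - q)^m1 ≤ (r:ℝ) * (δ/(2*r)) := by
        apply mul_le_mul_of_nonneg_left _ (by positivity)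
        calc (1 - q)^m1 ≤ Real.exp (-(q * m1)) := h1
          _ ≤ Real.exp (-(10 * L)) := h3
          _ = (δ/(2*r))^(10:ℕ) := h4
          _ ≤ δ/(2*r) := h5
    _ ≤ δ := h6


lemma span_cols_iff {N1 N2 r : ℕ} (L : Matrix (Fin N1) (Fin N2) ℝ)
    (U : Matrix (Fin N1) (Fin r) ℝ) (S : Matrix (Fin r) (Fin r) ℝ)
    (V : Matrix (Fin N2) (Fin r) ℝ)
    (hrank : L.rank = r) (hsvd : L = U * S * Vᵀ) (horth : Vᵀ * V = 1)
    {m : ℕ} (f : Fin m → Fin N2) :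
    (Submodule.span ℝ (Set.range fun j : Fin m => fun x : Fin N1 => L x (f j))
        = LinearMap.range L.mulVecLin)
    ↔ Submodule.span ℝ (Set.range fun j : Fin m => (fun k => V (f j) k : Fin r → ℝ)) = ⊤ := by
  set B := U * S with hB
  set A := B.mulVecLin with hA
  -- L.mulVecLin = A ∘ Vᵀ.mulVecLin
  have hcomp : L.mulVecLin = A ∘ₗ (Vᵀ).mulVecLin := by
    rw [hsvd, hB, ← Matrix.mulVecLin_mul]
  -- Vᵀ.mulVecLin surjective
  have hsurj : Function.Surjective (Vᵀ).mulVecLin := by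
    intro x
    refine ⟨V.mulVec x, ?_⟩
    show Vᵀ.mulVec (V.mulVec x) = x
    rw [Matrix.mulVec_mulVec, horth, Matrix.one_mulVec]
  -- range L.mulVecLin = range A
  have hrangeL : LinearMap.range L.mulVecLin = LinearMap.range A := by
    rw [hcomp, LinearMap.range_comp, LinearMap.range_eq_top.2 hsurj, Submodule.map_top]
  -- A injective
  have hinj : Function.Injective A := by
    rw [← LinearMap.ker_eq_bot]
    have hfin : Module.finrank ℝ (Fin r → ℝ) = r := by
      simp [Module.finrank_pi]
    have hrn := LinearMap.finrank_range_add_finrank_ker A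
    rw [hfin] at hrn
    have hle : r ≤ Module.finrank ℝ (LinearMap.range A) := by
      have : LinearMap.range L.mulVecLin ≤ LinearMap.range A := le_of_eq hrangeL
      have hmono := Submodule.finrank_mono this
      have : L.rank = Module.finrank ℝ (LinearMap.range L.mulVecLin) := rfl
      omega
    have hker0 : Module.finrank ℝ (LinearMap.ker A) = 0 := by omega
    exact Submodule.finrank_eq_zero.1 hker0
  -- columns of L are A applied to rows of V
  have hcol : (fun j : Fin m => fun x : Fin N1 => L x (f j))
      = fun j : Fin m => A (fun k => V (f j) k) := by
    funext j
    funext x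
    show L x (f j) = B.mulVec (fun k => V (f j) k) x
    rw [hsvd]
    simp only [Matrix.mul_apply, Matrix.mulVec, dotProduct, hB, Matrix.transpose_apply]
  rw [hcol, hrangeL]
  have himg : (Set.range fun j : Fin m => A (fun k => V (f j) k))
      = A '' (Set.range fun j : Fin m => (fun k => V (f j) k : Fin r → ℝ)) := by
    rw [← Set.range_comp]
    rfl
  rw [himg, ← Submodule.map_span, ← Submodule.map_top (A)]
  exact ⟨fun h => Submodule.map_injective_of_injective hinj h,
    fun h => by rw [h]⟩



open scoped Classical in
/-- Lemma 1: if `m1 ≥ 10 μ_v r log(2r/δ)` columns of a rank-`r` matrix `L`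
(with row-space coherence `μ_v`) are sampled uniformly at random with replacement,
then with probability at least `1 - δ` they span the column space of `L`. -/
theorem stmt0 (N1 N2 r : ℕ) [NeZero N2]
    (L : Matrix (Fin N1) (Fin N2) ℝ)
    (U : Matrix (Fin N1) (Fin r) ℝ) (S : Matrix (Fin r) (Fin r) ℝ)
    (V : Matrix (Fin N2) (Fin r) ℝ)
    (hrank : L.rank = r) (hsvd : L = U * S * Vᵀ) (horth : Vᵀ * V = 1)
    (μv δ : ℝ) (hδ : δ ∈ Set.Ioo (0:ℝ) 1)
    (hcoh : ∀ i : Fin N2, ∑ k : Fin r, (V i k) ^ 2 ≤ μv * r / N2)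
    (m1 : ℕ) (hm1 : (m1 : ℝ) ≥ 10 * μv * r * Real.log (2 * r / δ)) :
    1 - δ ≤
      ((Finset.univ.filter fun f : Fin m1 → Fin N2 =>
          Submodule.span ℝ (Set.range fun j : Fin m1 => fun x : Fin N1 => L x (f j))
            = LinearMap.range L.mulVecLin).card : ℝ) / (N2 : ℝ) ^ m1 := by
  classical
  obtain ⟨hδ0, hδ1⟩ := hδ
  have hN2 : 0 < N2 := Nat.pos_of_ne_zero (NeZero.ne N2)
  have hN2R : (0:ℝ) < (N2:ℝ)^m1 := by positivity
  -- P f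
  set P : (Fin m1 → Fin N2) → Prop := fun f =>
    Submodule.span ℝ (Set.range fun j : Fin m1 => fun x : Fin N1 => L x (f j))
      = LinearMap.range L.mulVecLin with hP
  have hcardU : (Fintype.card (Fin m1 → Fin N2)) = N2 ^ m1 := by
    simp [Fintype.card_fun]
  rcases Nat.eq_zero_or_pos r with hr0 | hr
  · -- degenerate case r = 0
    subst hr0
    have hL0 : L = 0 := by
      ext x j
      rw [hsvd]
      simp [Matrix.mul_apply]
    have hall : ∀ f : Fin m1 → Fin N2, P f := by
      intro f
      rw [hP]
      simp only [hL0]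
      rw [show (0 : Matrix (Fin N1) (Fin N2) ℝ).mulVecLin = 0 from by simp,
        LinearMap.range_zero]
      rw [eq_bot_iff, Submodule.span_le]
      rintro _ ⟨j, rfl⟩
      simp only [SetLike.mem_coe, Submodule.mem_bot, Matrix.zero_apply]
      rfl
    have : (Finset.univ.filter P) = Finset.univ := by
      refine Finset.filter_true_of_mem fun f _ => hall f
    rw [this]
    rw [show ((Finset.univ : Finset (Fin m1 → Fin N2)).card) = N2 ^ m1 from by
      rw [Finset.card_univ, hcardU]]
    push_cast
    rw [div_self (ne_of_gt hN2R)]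
    linarith
  -- main case r ≥ 1
  set e : EuclideanSpace ℝ (Fin r) ≃ₗ[ℝ] (Fin r → ℝ) := WithLp.linearEquiv 2 ℝ (Fin r → ℝ) with he
  set v : Fin N2 → EuclideanSpace ℝ (Fin r) := fun j => e.symm (fun k => V j k) with hv
  have hev : ∀ j, e (v j) = fun k => V j k := by
    intro j; rw [hv]; simp
  have hvk : ∀ j k, (v j) k = V j k := by
    intro j k; exact congrFun (hev j) k
  have hVV : ∀ k l : Fin r, ∑ j, V j k * V j l = if k = l then 1 else 0 := by
    intro k l
    have := congrFun (congrFun horth k) l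
    simpa [Matrix.mul_apply, Matrix.one_apply, Matrix.transpose_apply] using this
  have hinner : ∀ (j : Fin N2) (x : EuclideanSpace ℝ (Fin r)),
      (inner ℝ (v j) x : ℝ) = ∑ k, V j k * x k := by
    intro j x
    rw [PiLp.inner_apply]
    exact Finset.sum_congr rfl fun k _ => by rw [RCLike.inner_apply, hvk]; simp [mul_comm]
  have hsum : ∀ x : EuclideanSpace ℝ (Fin r), ∑ j, (inner ℝ (v j) x : ℝ)^2 = ‖x‖^2 := by
    intro x
    have hnorm : ‖x‖^2 = ∑ k, x k * x k := by
      rw [← real_inner_self_eq_norm_sq, PiLp.inner_apply]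
      exact Finset.sum_congr rfl fun k _ => by rw [RCLike.inner_apply]; simp
    rw [hnorm]
    calc ∑ j, (inner ℝ (v j) x : ℝ)^2
        = ∑ j, ∑ k, ∑ l, (V j k * x k) * (V j l * x l) := by
          refine Finset.sum_congr rfl fun j _ => ?_
          rw [hinner, pow_two, Finset.sum_mul_sum]
      _ = ∑ k, ∑ l, ∑ j, (V j k * x k) * (V j l * x l) := by
          rw [Finset.sum_comm]
          exact Finset.sum_congr rfl fun k _ => Finset.sum_comm
      _ = ∑ k, ∑ l, (x k * x l) * ∑ j, V j k * V j l := by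
          refine Finset.sum_congr rfl fun k _ => Finset.sum_congr rfl fun l _ => ?_
          rw [Finset.mul_sum]
          exact Finset.sum_congr rfl fun j _ => by ring
      _ = ∑ k, x k * x k := by
          refine Finset.sum_congr rfl fun k _ => ?_
          rw [show ∑ l, (x k * x l) * ∑ j, V j k * V j l
              = ∑ l, if k = l then x k * x l else 0 from
            Finset.sum_congr rfl fun l _ => by rw [hVV]; split <;> simp]
          simp
  set c : ℝ := μv * r / N2 with hc
  have hcj : ∀ j, ‖v j‖^2 ≤ c := by
    intro j
    rw [← real_inner_self_eq_norm_sq, hinner]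
    calc ∑ k, V j k * (v j) k = ∑ k, (V j k)^2 := by
          refine Finset.sum_congr rfl fun k _ => by rw [hvk]; ring
      _ ≤ c := hcoh j
  have hcount := count_notin v hsum c hcj
  have hN2ne : ((N2:ℝ)) ≠ 0 := by positivity
  have hNc : (N2:ℝ) * c = μv * r := by
    rw [hc]; field_simp
  -- positivity of c and μv * r ≥ r
  have hμr : (r:ℝ) ≤ μv * r := by
    have htr : (r : ℝ) = ∑ j, ∑ k, (V j k)^2 := by
      rw [Finset.sum_comm]
      have : ∀ k : Fin r, ∑ j, (V j k)^2 = 1 := by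
        intro k
        have := hVV k k
        simpa [pow_two] using this
      simp [this]
    have hle : ∑ j : Fin N2, ∑ k, (V j k)^2 ≤ ∑ j : Fin N2, c :=
      Finset.sum_le_sum fun j _ => hcoh j
    rw [Finset.sum_const, Finset.card_univ, Fintype.card_fin, nsmul_eq_mul, hNc] at hle
    rw [← htr] at hle
    exact hle
  have hr1 : (1:ℝ) ≤ (r:ℝ) := by exact_mod_cast hr
  have hcpos : 0 < c := by
    have h1 := hcount ⊥
    simp only [Submodule.mem_bot, finrank_bot] at h1
    by_contra hcle
    push_neg at hcle
    have hcard : ((Finset.univ.filter fun j => ¬ v j = 0).card : ℝ) ≤ N2 := by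
      exact_mod_cast le_trans (Finset.card_le_card (Finset.filter_subset _ _))
        (le_of_eq (by simp))
    nlinarith [Nat.cast_nonneg (α := ℝ) (Finset.univ.filter fun j => ¬ v j = 0).card]
  set q : ℝ := 1/(μv * r) with hq
  have hq1 : q ≤ 1 := by
    rw [hq, div_le_one (by linarith)]
    linarith
  have hstep := step_lemma v c hcpos hcount
  rw [hNc] at hstep
  have hind := induct_lemma v q hq1 hstep m1
  have hnum := numeric_lemma r m1 μv δ hr hδ0 hδ1 hμr hm1
  -- identify bad set
  set Bad := Finset.univ.filter (fun f : Fin m1 → Fin N2 => ¬ P f) with hBad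
  have hbadle : (Bad.card : ℝ) ≤ (N2:ℝ)^m1 * δ := by
    have hterm : ∀ f ∈ Bad, (1:ℝ) ≤
        (r:ℝ) - Module.finrank ℝ (Submodule.span ℝ (Set.range (v ∘ f))) := by
      intro f hf
      rw [hBad, Finset.mem_filter] at hf
      have hnot : ¬ Submodule.span ℝ (Set.range (v ∘ f)) = ⊤ := by
        intro htop
        apply hf.2
        show Submodule.span ℝ (Set.range fun j : Fin m1 => fun x : Fin N1 => L x (f j))
          = LinearMap.range L.mulVecLin
        rw [span_cols_iff L U S V hrank hsvd horth f]
        have himg : (Set.range fun j : Fin m1 => (fun k => V (f j) k : Fin r → ℝ))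
            = (e : EuclideanSpace ℝ (Fin r) →ₗ[ℝ] (Fin r → ℝ)) '' (Set.range (v ∘ f)) := by
          rw [← Set.range_comp]
          refine congrArg _ (funext fun j => ?_)
          exact (hev (f j)).symm
        rw [himg, ← Submodule.map_span, htop, Submodule.map_top, LinearEquiv.range]
      have hlt : Module.finrank ℝ (Submodule.span ℝ (Set.range (v ∘ f))) < r := by
        have := Submodule.finrank_lt (K := ℝ) hnot
        rwa [finrank_euclideanSpace_fin] at this
      have : (Module.finrank ℝ (Submodule.span ℝ (Set.range (v ∘ f))) : ℝ) + 1 ≤ r := by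
        exact_mod_cast hlt
      linarith
    have hnonneg : ∀ f : Fin m1 → Fin N2, (0:ℝ) ≤
        (r:ℝ) - Module.finrank ℝ (Submodule.span ℝ (Set.range (v ∘ f))) := by
      intro f
      have h1 : Module.finrank ℝ (Submodule.span ℝ (Set.range (v ∘ f))) ≤ r := by
        simpa [finrank_euclideanSpace_fin] using
          Submodule.finrank_le (Submodule.span ℝ (Set.range (v ∘ f)))
      have : (Module.finrank ℝ (Submodule.span ℝ (Set.range (v ∘ f))) : ℝ) ≤ r := by
        exact_mod_cast h1
      linarith
    calc (Bad.card : ℝ)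
        = ∑ _f ∈ Bad, (1:ℝ) := by rw [Finset.sum_const, nsmul_eq_mul, mul_one]
      _ ≤ ∑ f ∈ Bad, ((r:ℝ) - Module.finrank ℝ (Submodule.span ℝ (Set.range (v ∘ f)))) :=
          Finset.sum_le_sum hterm
      _ ≤ ∑ f : Fin m1 → Fin N2,
            ((r:ℝ) - Module.finrank ℝ (Submodule.span ℝ (Set.range (v ∘ f)))) :=
          Finset.sum_le_sum_of_subset_of_nonneg (Finset.filter_subset _ _)
            (fun f _ _ => hnonneg f)
      _ ≤ (N2:ℝ)^m1 * (1-q)^m1 * r := hind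
      _ = (N2:ℝ)^m1 * ((r:ℝ) * (1-q)^m1) := by ring
      _ ≤ (N2:ℝ)^m1 * δ := by
          apply mul_le_mul_of_nonneg_left _ (by positivity)
          rw [hq]
          exact hnum
  -- conclude
  have hsplit : (Finset.univ.filter P).card + Bad.card = N2 ^ m1 := by
    rw [hBad]
    rw [Finset.card_filter_add_card_filter_not]
    rw [Finset.card_univ, hcardU]
  have h9 : ((Finset.univ.filter P).card : ℝ) + Bad.card = (N2:ℝ)^m1 := by
    exact_mod_cast hsplit
  show (1:ℝ) - δ ≤ ((Finset.univ.filter P).card : ℝ) / (N2:ℝ)^m1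
  rw [le_div_iff₀ hN2R]
  nlinarith [hbadle, h9]
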